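/- arXiv:2503.10552 — 2 statements merged into one kernel-verified Lean document; each statement's English description precedes it below -/
import Mathlib

section
/- Consider the semi-implicit scheme for curve evolution: for i=1,…,n, x_{i-1}^{m+1}(−δ_i/h_i − b⁻/2) + x_{i+1}^{m+1}(−δ_i/h_{i+1} − b⁺/2) + x_i^{m+1}((h_i+h_{i+1})/(2τ) + δ_i/h_i + δ_i/h_{i+1} + b⁻/2 + b⁺/2) = RHS_i, where δ_i > 0, h_i, h_{i+1} > 0, τ > 0, b⁻ = max(−α_i,0) ≥ 0, b⁺ = max(α_i,0) ≥ 0. Then the system matrix is tridiagonal and strictly diagonally dominant, hence invertible, for every time step τ > 0. -/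
lemma sum_ite_le_of_subsingleton {n : ℕ} (P : Fin n → Prop) [DecidablePred P]
    (c : ℝ) (hc : 0 ≤ c) (hP : ∀ a b, P a → P b → a = b) :
    ∑ j : Fin n, (if P j then c else 0) ≤ c := by
  classical
  rw [← Finset.sum_filter, Finset.sum_const, nsmul_eq_mul]
  have hcard : (Finset.univ.filter P).card ≤ 1 :=
    Finset.card_le_one.2 (fun a ha b hb =>
      hP a b (Finset.mem_filter.1 ha).2 (Finset.mem_filter.1 hb).2)
  calc ((Finset.univ.filter P).card : ℝ) * c ≤ 1 * c := by
        apply mul_le_mul_of_nonneg_right _ hc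
        exact_mod_cast hcard
    _ = c := one_mul c

/-- The system matrix of the semi-implicit scheme for curve evolution is
tridiagonal and strictly diagonally dominant, hence invertible, for every
time step τ > 0. Row i (0-based) corresponds to the unknown grid point i+1. -/
theorem semiImplicit_matrix_invertible
    (n : ℕ) (τ : ℝ) (hτ : 0 < τ) (δ h α : ℕ → ℝ)
    (hδ : ∀ i, 0 < δ i) (hh : ∀ i, 0 < h i)
    (A : Matrix (Fin n) (Fin n) ℝ)
    (hA : ∀ i j : Fin n,
      A i j =
        if (j : ℕ) = (i : ℕ) then
          (h ((i : ℕ) + 1) + h ((i : ℕ) + 2)) / (2 * τ)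
            + δ ((i : ℕ) + 1) / h ((i : ℕ) + 1)
            + δ ((i : ℕ) + 1) / h ((i : ℕ) + 2)
            + max (-(α ((i : ℕ) + 1))) 0 / 2 + max (α ((i : ℕ) + 1)) 0 / 2
        else if (j : ℕ) + 1 = (i : ℕ) then
          -(δ ((i : ℕ) + 1) / h ((i : ℕ) + 1)) - max (-(α ((i : ℕ) + 1))) 0 / 2
        else if (i : ℕ) + 1 = (j : ℕ) then
          -(δ ((i : ℕ) + 1) / h ((i : ℕ) + 2)) - max (α ((i : ℕ) + 1)) 0 / 2
        else 0) :
    (∀ i j : Fin n, ((i : ℕ) + 1 < (j : ℕ) ∨ (j : ℕ) + 1 < (i : ℕ)) → A i j = 0) ∧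
    (∀ i : Fin n, ∑ j ∈ Finset.univ.erase i, |A i j| < |A i i|) ∧
    IsUnit A := by
  classical
  have htri : ∀ i j : Fin n, ((i : ℕ) + 1 < (j : ℕ) ∨ (j : ℕ) + 1 < (i : ℕ)) → A i j = 0 := by
    intro i j hij
    rw [hA]
    have h1 : ¬ ((j : ℕ) = (i : ℕ)) := by omega
    have h2 : ¬ ((j : ℕ) + 1 = (i : ℕ)) := by omega
    have h3 : ¬ ((i : ℕ) + 1 = (j : ℕ)) := by omega
    simp [h1, h2, h3]
  have hdom : ∀ i : Fin n, ∑ j ∈ Finset.univ.erase i, |A i j| < |A i i| := by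
    intro i
    obtain ⟨c1, hc1def⟩ : ∃ c : ℝ,
        c = δ ((i : ℕ) + 1) / h ((i : ℕ) + 1) + max (-(α ((i : ℕ) + 1))) 0 / 2 := ⟨_, rfl⟩
    obtain ⟨c2, hc2def⟩ : ∃ c : ℝ,
        c = δ ((i : ℕ) + 1) / h ((i : ℕ) + 2) + max (α ((i : ℕ) + 1)) 0 / 2 := ⟨_, rfl⟩
    have hc1 : 0 ≤ c1 := by
      rw [hc1def]
      have := (hδ ((i : ℕ) + 1)); have := (hh ((i : ℕ) + 1)); positivity
    have hc2 : 0 ≤ c2 := by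
      rw [hc2def]
      have := (hδ ((i : ℕ) + 1)); have := (hh ((i : ℕ) + 2)); positivity
    have hD : 0 < (h ((i : ℕ) + 1) + h ((i : ℕ) + 2)) / (2 * τ) := by
      have := (hh ((i : ℕ) + 1)); have := (hh ((i : ℕ) + 2)); positivity
    have hdiag : A i i = (h ((i : ℕ) + 1) + h ((i : ℕ) + 2)) / (2 * τ) + c1 + c2 := by
      rw [hA, if_pos rfl, hc1def, hc2def]; ring
    have hsum : ∑ j ∈ Finset.univ.erase i, |A i j| ≤ c1 + c2 := by
      have hbound : ∀ j ∈ Finset.univ.erase i,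
          |A i j| ≤ (if (j : ℕ) + 1 = (i : ℕ) then c1 else 0)
            + (if (i : ℕ) + 1 = (j : ℕ) then c2 else 0) := by
        intro j hj
        have hji : (j : ℕ) ≠ (i : ℕ) := by
          intro hc; exact (Finset.mem_erase.1 hj).1 (Fin.ext hc)
        rw [hA, if_neg hji]
        by_cases h2 : (j : ℕ) + 1 = (i : ℕ)
        · have h3 : ¬ ((i : ℕ) + 1 = (j : ℕ)) := by omega
          rw [if_pos h2, if_pos h2, if_neg h3, add_zero]
          have : -(δ ((i : ℕ) + 1) / h ((i : ℕ) + 1))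
              - max (-(α ((i : ℕ) + 1))) 0 / 2 = -c1 := by rw [hc1def]; ring
          rw [this, abs_neg, abs_of_nonneg hc1]
        · rw [if_neg h2, if_neg h2, zero_add]
          by_cases h3 : (i : ℕ) + 1 = (j : ℕ)
          · rw [if_pos h3, if_pos h3]
            have : -(δ ((i : ℕ) + 1) / h ((i : ℕ) + 2))
                - max (α ((i : ℕ) + 1)) 0 / 2 = -c2 := by rw [hc2def]; ring
            rw [this, abs_neg, abs_of_nonneg hc2]
          · rw [if_neg h3, if_neg h3, abs_zero]
      calc ∑ j ∈ Finset.univ.erase i, |A i j|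
          ≤ ∑ j ∈ Finset.univ.erase i,
              ((if (j : ℕ) + 1 = (i : ℕ) then c1 else 0)
                + (if (i : ℕ) + 1 = (j : ℕ) then c2 else 0)) :=
            Finset.sum_le_sum hbound
        _ ≤ ∑ j : Fin n,
              ((if (j : ℕ) + 1 = (i : ℕ) then c1 else 0)
                + (if (i : ℕ) + 1 = (j : ℕ) then c2 else 0)) := by
            apply Finset.sum_le_sum_of_subset_of_nonneg (Finset.erase_subset _ _)
            intro j _ _
            apply add_nonneg <;> split <;> simp [hc1, hc2]
        _ = (∑ j : Fin n, (if (j : ℕ) + 1 = (i : ℕ) then c1 else 0))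
              + ∑ j : Fin n, (if (i : ℕ) + 1 = (j : ℕ) then c2 else 0) :=
            Finset.sum_add_distrib
        _ ≤ c1 + c2 := by
            apply add_le_add
            · exact sum_ite_le_of_subsingleton _ c1 hc1
                (fun a b ha hb => Fin.ext (by omega))
            · exact sum_ite_le_of_subsingleton _ c2 hc2
                (fun a b ha hb => Fin.ext (by omega))
    have hAii : 0 < A i i := by rw [hdiag]; linarith
    rw [abs_of_pos hAii, hdiag]
    linarith
  refine ⟨htri, hdom, ?_⟩
  apply (Matrix.isUnit_iff_isUnit_det A).2
  apply isUnit_iff_ne_zero.2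
  apply det_ne_zero_of_sum_row_lt_diag
  intro k
  simpa [Real.norm_eq_abs] using hdom k
end

section
/- Let x: [0,1]→ℝ² be a regular C² plane curve and define the curvature discretization k_i = sgn(h_{i-1} ∧ h_{i+1}) · (1/(2h_i)) · arccos((h_{i-1}·h_{i+1})/(|h_{i-1}||h_{i+1}|)) on a uniform partition with elements h_i = x(u_i) − x(u_{i-1}) of length h_i. Then as the mesh size tends to 0, k_i converges to the curvature k of the curve at the corresponding point. -/
open scoped RealInnerProductSpace
open Real Filter Set

noncomputable def perp (v : EuclideanSpace ℝ (Fin 2)) : EuclideanSpace ℝ (Fin 2) :=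
  (WithLp.equiv 2 (Fin 2 → ℝ)).symm ![v 1, -(v 0)]

/-- 2D wedge product (determinant) of two plane vectors. -/
def det2 (a b : EuclideanSpace ℝ (Fin 2)) : ℝ := a 0 * b 1 - a 1 * b 0

private lemma inner_eq' (u v : EuclideanSpace ℝ (Fin 2)) : ⟪u, v⟫ = u 0 * v 0 + u 1 * v 1 := by
  simp [PiLp.inner_apply, Fin.sum_univ_two, mul_comm]

private lemma norm_sq_eq' (u : EuclideanSpace ℝ (Fin 2)) : ‖u‖ ^ 2 = u 0 ^ 2 + u 1 ^ 2 := by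
  rw [← real_inner_self_eq_norm_sq, inner_eq']; ring

private lemma lagrange' (a b : EuclideanSpace ℝ (Fin 2)) :
    ⟪a, b⟫ ^ 2 + (det2 a b) ^ 2 = (‖a‖ * ‖b‖) ^ 2 := by
  rw [inner_eq', det2, mul_pow, norm_sq_eq', norm_sq_eq']; ring

private lemma perp_apply0' (v : EuclideanSpace ℝ (Fin 2)) : perp v 0 = v 1 := by
  simp [perp]

private lemma perp_apply1' (v : EuclideanSpace ℝ (Fin 2)) : perp v 1 = -(v 0) := by
  simp [perp]

private lemma sign_arccos_eq' (a b : EuclideanSpace ℝ (Fin 2)) (ha : 0 < ‖a‖) (hb : 0 < ‖b‖)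
    (hI : 0 < ⟪a, b⟫) :
    Real.sign (det2 a b) * Real.arccos (⟪a, b⟫ / (‖a‖ * ‖b‖)) =
      Real.arcsin (det2 a b / (‖a‖ * ‖b‖)) := by
  set P := ‖a‖ * ‖b‖ with hPdef
  have hP : 0 < P := mul_pos ha hb
  set F := ⟪a, b⟫ / P with hFdef
  set G := det2 a b / P with hGdef
  have hF : 0 < F := div_pos hI hP
  have hFG : F ^ 2 + G ^ 2 = 1 := by
    rw [hFdef, hGdef, div_pow, div_pow, ← add_div, lagrange' a b, div_self (by positivity)]
  have hFs : F = Real.sqrt (1 - G ^ 2) := by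
    have : 1 - G ^ 2 = F ^ 2 := by linarith
    rw [this, Real.sqrt_sq hF.le]
  have harccos : Real.arccos F = Real.arcsin |G| := by
    have hc : Real.cos (Real.arcsin |G|) = F := by
      rw [Real.cos_arcsin, sq_abs, ← hFs]
    rw [← hc, Real.arccos_cos (Real.arcsin_nonneg.2 (abs_nonneg _))
      ((Real.arcsin_le_pi_div_two _).trans (by linarith [Real.pi_pos]))]
  rcases lt_trichotomy (det2 a b) 0 with hD | hD | hD
  · have hGneg : G < 0 := div_neg_of_neg_of_pos hD hP
    rw [Real.sign_of_neg hD, harccos, abs_of_neg hGneg, Real.arcsin_neg]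
    ring
  · rw [hD, Real.sign_zero, zero_mul, hGdef, hD, zero_div, Real.arcsin_zero]
  · have hGpos : 0 < G := div_pos hD hP
    rw [Real.sign_of_pos hD, harccos, abs_of_pos hGpos, one_mul]

private lemma taylor2' {E : Type*} [NormedAddCommGroup E] [NormedSpace ℝ E] {x : ℝ → E}
    (hx : ContDiff ℝ 2 x) (s : ℝ) :
    Filter.Tendsto (fun t : ℝ => (t ^ 2)⁻¹ •
      (x (s + t) - x s - t • deriv x s - (t ^ 2 / 2) • deriv (deriv x) s))
      (nhdsWithin (0:ℝ) {0}ᶜ) (nhds 0) := by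
  have hdiff : Differentiable ℝ x := hx.differentiable (by norm_num)
  have hd1 : ContDiff ℝ 1 (deriv x) := by
    have h2 : ContDiff ℝ (1 + 1 : ℕ) x := by norm_num; exact_mod_cast hx
    exact ((contDiff_succ_iff_deriv).mp (by exact_mod_cast h2)).2.2
  have hdd : Differentiable ℝ (deriv x) := hd1.differentiable (by norm_num)
  set T := deriv x s with hT
  set Q := deriv (deriv x) s with hQdef
  have hQ : HasDerivAt (deriv x) Q s := (hdd s).hasDerivAt
  have h1 : ∀ ε > 0, ∃ δ > 0, ∀ u : ℝ, |u| < δ → ‖deriv x (s + u) - T - u • Q‖ ≤ ε * |u| := by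
    intro ε hε
    have ht := hasDerivAt_iff_tendsto.mp hQ
    have h2 : ∀ᶠ u in nhds s, ‖u - s‖⁻¹ * ‖deriv x u - deriv x s - (u - s) • Q‖ < ε :=
      ht.eventually_lt_const hε
    rw [Metric.eventually_nhds_iff] at h2
    obtain ⟨δ, hδ, hδ2⟩ := h2
    refine ⟨δ, hδ, fun u hu => ?_⟩
    rcases eq_or_ne u 0 with rfl | hune
    · simp [hT]
    · have := hδ2 (y := s + u) (by simpa [Real.dist_eq, abs_of_nonneg] using hu)
      simp only [add_sub_cancel_left] at this
      have hnu : (0:ℝ) < |u| := abs_pos.2 hune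
      rw [← hT] at this
      calc ‖deriv x (s + u) - T - u • Q‖
          = |u| * (‖u‖⁻¹ * ‖deriv x (s + u) - T - u • Q‖) := by
            rw [Real.norm_eq_abs, ← mul_assoc, mul_inv_cancel₀ hnu.ne', one_mul]
        _ ≤ |u| * ε := mul_le_mul_of_nonneg_left this.le hnu.le
        _ = ε * |u| := mul_comm _ _
  rw [NormedAddCommGroup.tendsto_nhds_zero]
  intro ε hε
  obtain ⟨δ, hδ, hbound⟩ := h1 (ε / 4) (by positivity)
  have e1 : ∀ᶠ t : ℝ in nhdsWithin (0:ℝ) {0}ᶜ, |t| < δ := by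
    apply eventually_nhdsWithin_of_eventually_nhds
    have := Metric.ball_mem_nhds (0:ℝ) hδ
    filter_upwards [this] with t ht
    simpa [Real.dist_eq] using ht
  have e2 : ∀ᶠ t : ℝ in nhdsWithin (0:ℝ) {0}ᶜ, t ≠ 0 := eventually_mem_nhdsWithin
  filter_upwards [e1, e2] with t ht htne
  set g : ℝ → E := fun u => x (s + u) - u • T - (u ^ 2 / 2) • Q with hg
  have hgd : ∀ u : ℝ, HasDerivAt g (deriv x (s + u) - T - u • Q) u := by
    intro u
    have h4 : HasDerivAt (fun u : ℝ => s + u) 1 u := (hasDerivAt_id u).const_add s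
    have h3 : HasDerivAt (fun u : ℝ => x (s + u)) (deriv x (s + u)) u := by
      simpa [Function.comp_def] using ((hdiff (s + u)).hasDerivAt).scomp u h4
    have h5 : HasDerivAt (fun u : ℝ => u • T) T u := by
      simpa using (hasDerivAt_id u).smul_const T
    have h6 : HasDerivAt (fun u : ℝ => (u ^ 2 / 2) • Q) (u • Q) u := by
      have := ((hasDerivAt_pow 2 u).div_const 2).smul_const Q
      norm_num at this
      convert this using 1
    exact (h3.sub h5).sub h6
  have hb : ∀ u : ℝ, |u| ≤ |t| → ‖deriv x (s + u) - T - u • Q‖ ≤ ε / 4 * |t| := by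
    intro u hu
    refine (hbound u (lt_of_le_of_lt hu ht)).trans ?_
    have : (0:ℝ) ≤ ε / 4 := by positivity
    nlinarith [abs_nonneg t, abs_nonneg u]
  have key : ‖g t - g 0‖ ≤ ε / 4 * |t| * |t| := by
    rcases le_or_gt 0 t with h0 | h0
    · have := norm_image_sub_le_of_norm_deriv_le_segment' (f := g) (a := 0) (b := t)
        (f' := fun u => deriv x (s + u) - T - u • Q)
        (fun u _ => (hgd u).hasDerivWithinAt)
        (fun u hu => hb u (by rw [abs_of_nonneg hu.1, abs_of_nonneg h0]; exact hu.2.le))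
        t (right_mem_Icc.2 h0)
      calc ‖g t - g 0‖ ≤ ε / 4 * |t| * (t - 0) := this
        _ = ε / 4 * |t| * |t| := by rw [sub_zero, abs_of_nonneg h0]
    · have := norm_image_sub_le_of_norm_deriv_le_segment' (f := g) (a := t) (b := 0)
        (f' := fun u => deriv x (s + u) - T - u • Q)
        (fun u _ => (hgd u).hasDerivWithinAt)
        (fun u hu => hb u (by rw [abs_of_nonpos hu.2.le, abs_of_neg h0]; linarith [hu.1]))
        0 (right_mem_Icc.2 h0.le)
      calc ‖g t - g 0‖ = ‖g 0 - g t‖ := (norm_sub_rev _ _)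
        _ ≤ ε / 4 * |t| * (0 - t) := this
        _ = ε / 4 * |t| * |t| := by rw [zero_sub, abs_of_neg h0]
  have hgt : g t - g 0 = x (s + t) - x s - t • T - (t ^ 2 / 2) • Q := by
    simp [hg]; abel
  have ht2 : (0:ℝ) < t ^ 2 := by positivity
  have hnorm : ‖(t ^ 2)⁻¹ • (x (s + t) - x s - t • T - (t ^ 2 / 2) • Q)‖
      = (t ^ 2)⁻¹ * ‖g t - g 0‖ := by
    rw [hgt, norm_smul, Real.norm_eq_abs, abs_inv, abs_of_pos ht2]
  rw [hnorm]
  have habs : |t| * |t| = t ^ 2 := by rw [← abs_mul, ← sq, abs_of_pos ht2]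
  calc (t ^ 2)⁻¹ * ‖g t - g 0‖ ≤ (t ^ 2)⁻¹ * (ε / 4 * |t| * |t|) := by
        apply mul_le_mul_of_nonneg_left key (by positivity)
    _ = (t ^ 2)⁻¹ * (ε / 4 * t ^ 2) := by rw [mul_assoc, habs]
    _ = ε / 4 := by field_simp
    _ < ε := by linarith

private lemma alg1' (d nA nB h : ℝ) (hh : h ≠ 0) (ha : nA ≠ 0) (hb : nB ≠ 0) :
    d / h ^ 3 * ((nA / h)⁻¹ * (nB / h)⁻¹) * h = d / (nA * nB) := by
  field_simp

private lemma alg2' (d nA nB nC h : ℝ) (hh : h ≠ 0) (ha : nA ≠ 0) (hb : nB ≠ 0) (hc : nC ≠ 0) :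
    d / h ^ 3 * ((nA / h)⁻¹ * (nB / h)⁻¹ * (nC / h)⁻¹) * 2⁻¹ = d / (nA * nB) / (2 * nC) := by
  field_simp

private lemma alg3' (t0 t1 a0 a1 b0 b1 h : ℝ) (hh : h ≠ 0) :
    (t0 * b1 - t1 * b0) + (a0 * t1 - a1 * t0) + h * (a0 * b1 - a1 * b0) =
      ((h * t0 + h ^ 2 * a0) * (h * t1 + h ^ 2 * b1) -
        (h * t1 + h ^ 2 * a1) * (h * t0 + h ^ 2 * b0)) / h ^ 3 := by
  field_simp; ring

set_option maxHeartbeats 1600000 in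
/-- Consistency of the curvature discretization
k_i = sgn(h_{i-1} ∧ h_{i+1}) (1/(2h_i)) arccos(h_{i-1}·h_{i+1}/(|h_{i-1}||h_{i+1}|)):
for a C², arclength-parametrized plane curve it converges, as the mesh size
tends to 0, to the curvature at the corresponding point. -/
theorem curvature_discretization_consistency
    (x : ℝ → EuclideanSpace ℝ (Fin 2)) (k : ℝ → ℝ)
    (hx : ContDiff ℝ 2 x)
    (harc : ∀ t, ‖deriv x t‖ = 1)
    (hk : ∀ t, deriv (deriv x) t = (-(k t)) • perp (deriv x t))
    (s : ℝ) :
    Filter.Tendsto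
      (fun h : ℝ =>
        Real.sign (det2 (x s - x (s - h)) (x (s + 2 * h) - x (s + h))) *
          (1 / (2 * ‖x (s + h) - x s‖)) *
          Real.arccos (⟪x s - x (s - h), x (s + 2 * h) - x (s + h)⟫ /
            (‖x s - x (s - h)‖ * ‖x (s + 2 * h) - x (s + h)‖)))
      (nhdsWithin 0 (Set.Ioi 0)) (nhds (k s)) := by
  classical
  set T := deriv x s with hT
  set Q := deriv (deriv x) s with hQdef
  set L := nhdsWithin (0:ℝ) (Set.Ioi 0) with hL
  have hQ0 : Q 0 = -(k s) * T 1 := by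
    rw [hQdef, hk s]; simp [perp_apply0']; exact Or.inl rfl
  have hQ1 : Q 1 = k s * T 0 := by
    rw [hQdef, hk s]; simp [perp_apply1']; exact Or.inl rfl
  have hT2 : T 0 ^ 2 + T 1 ^ 2 = 1 := by
    have h := norm_sq_eq' T
    rw [hT, harc s] at h
    rw [← h]; norm_num
  -- filter facts
  have hLle : L ≤ nhdsWithin (0:ℝ) {0}ᶜ :=
    nhdsWithin_mono 0 (fun y hy => ne_of_gt hy)
  have hmem : ∀ᶠ h : ℝ in L, 0 < h := eventually_mem_nhdsWithin
  have hid0 : Tendsto (fun h : ℝ => h) L (nhds 0) := tendsto_id.mono_left nhdsWithin_le_nhds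
  have m2 : Tendsto (fun h : ℝ => h) L (nhdsWithin (0:ℝ) {0}ᶜ) := tendsto_id.mono_left hLle
  have m1 : Tendsto (fun h : ℝ => -h) L (nhdsWithin (0:ℝ) {0}ᶜ) := by
    apply tendsto_nhdsWithin_of_tendsto_nhds_of_eventually_within
    · simpa using (continuous_neg.tendsto (0:ℝ)).mono_left nhdsWithin_le_nhds
    · filter_upwards [hmem] with h hh
      simpa using (neg_ne_zero.2 (ne_of_gt hh))
  have m3 : Tendsto (fun h : ℝ => 2 * h) L (nhdsWithin (0:ℝ) {0}ᶜ) := by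
    apply tendsto_nhdsWithin_of_tendsto_nhds_of_eventually_within
    · simpa using ((continuous_mul_left (2:ℝ)).tendsto (0:ℝ)).mono_left
        (nhdsWithin_le_nhds (s := Set.Ioi (0:ℝ)))
    · filter_upwards [hmem] with h hh
      simpa using (by positivity : (0:ℝ) < 2 * h).ne'
  have hE := taylor2' hx s
  rw [← hT, ← hQdef] at hE
  -- second order limits for the three chords
  set A : ℝ → EuclideanSpace ℝ (Fin 2) :=
    fun h => (h ^ 2)⁻¹ • (x s - x (s - h) - h • T) with hAdef
  set B : ℝ → EuclideanSpace ℝ (Fin 2) :=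
    fun h => (h ^ 2)⁻¹ • (x (s + 2 * h) - x (s + h) - h • T) with hBdef
  set C : ℝ → EuclideanSpace ℝ (Fin 2) :=
    fun h => (h ^ 2)⁻¹ • (x (s + h) - x s - h • T) with hCdef
  have hA : Tendsto A L (nhds (-((2:ℝ)⁻¹ • Q))) := by
    have t1 := (hE.comp m1).neg.sub (tendsto_const_nhds (x := (2:ℝ)⁻¹ • Q))
    refine (by simpa using t1 : Tendsto _ L (nhds (-((2:ℝ)⁻¹ • Q)))).congr' ?_
    filter_upwards [hmem] with h hh
    have hne : (h:ℝ) ≠ 0 := ne_of_gt hh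
    simp only [Function.comp, hAdef]
    rw [show s + -h = s - h from by ring]
    match_scalars <;> field_simp <;> ring
  have hB : Tendsto B L (nhds ((3/2 : ℝ) • Q)) := by
    have t1 := (((hE.comp m3).const_smul (4:ℝ)).sub (hE.comp m2)).add
      (tendsto_const_nhds (x := (3/2 : ℝ) • Q))
    refine (by simpa using t1 : Tendsto _ L (nhds ((3/2:ℝ) • Q))).congr' ?_
    filter_upwards [hmem] with h hh
    have hne : (h:ℝ) ≠ 0 := ne_of_gt hh
    simp only [Function.comp, hBdef]
    match_scalars <;> field_simp <;> ring
  have hC : Tendsto C L (nhds ((2:ℝ)⁻¹ • Q)) := by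
    have t1 := (hE.comp m2).add (tendsto_const_nhds (x := (2:ℝ)⁻¹ • Q))
    refine (by simpa using t1 : Tendsto _ L (nhds ((2:ℝ)⁻¹ • Q))).congr' ?_
    filter_upwards [hmem] with h hh
    have hne : (h:ℝ) ≠ 0 := ne_of_gt hh
    simp only [Function.comp, hCdef]
    match_scalars <;> field_simp <;> ring
  -- first order limits
  have ha1 : Tendsto (fun h : ℝ => h⁻¹ • (x s - x (s - h))) L (nhds T) := by
    have t := (tendsto_const_nhds (x := T)).add (hid0.smul hA)
    refine (by simpa using t : Tendsto _ L (nhds T)).congr' ?_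
    filter_upwards [hmem] with h hh
    have hne : (h:ℝ) ≠ 0 := ne_of_gt hh
    simp only [hAdef]
    match_scalars <;> field_simp <;> ring
  have hb1 : Tendsto (fun h : ℝ => h⁻¹ • (x (s + 2 * h) - x (s + h))) L (nhds T) := by
    have t := (tendsto_const_nhds (x := T)).add (hid0.smul hB)
    refine (by simpa using t : Tendsto _ L (nhds T)).congr' ?_
    filter_upwards [hmem] with h hh
    have hne : (h:ℝ) ≠ 0 := ne_of_gt hh
    simp only [hBdef]
    match_scalars <;> field_simp <;> ring
  have hc1 : Tendsto (fun h : ℝ => h⁻¹ • (x (s + h) - x s)) L (nhds T) := by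
    have t := (tendsto_const_nhds (x := T)).add (hid0.smul hC)
    refine (by simpa using t : Tendsto _ L (nhds T)).congr' ?_
    filter_upwards [hmem] with h hh
    have hne : (h:ℝ) ≠ 0 := ne_of_gt hh
    simp only [hCdef]
    match_scalars <;> field_simp <;> ring
  have hTn : ‖T‖ = 1 := by rw [hT]; exact harc s
  -- norm limits
  have norm_lim : ∀ f : ℝ → EuclideanSpace ℝ (Fin 2),
      Tendsto (fun h : ℝ => h⁻¹ • f h) L (nhds T) →
      Tendsto (fun h : ℝ => ‖f h‖ / h) L (nhds 1) := by
    intro f hf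
    have t := hf.norm
    rw [hTn] at t
    refine t.congr' ?_
    filter_upwards [hmem] with h hh
    rw [norm_smul, Real.norm_eq_abs, abs_inv, abs_of_pos hh, inv_mul_eq_div]
  have na := norm_lim _ ha1
  have nb := norm_lim _ hb1
  have nc := norm_lim _ hc1
  have ia := na.inv₀ one_ne_zero
  have ib := nb.inv₀ one_ne_zero
  have ic := nc.inv₀ one_ne_zero
  rw [inv_one] at ia ib ic
  -- eventual positivity of norms
  have pos_of : ∀ f : ℝ → EuclideanSpace ℝ (Fin 2),
      Tendsto (fun h : ℝ => ‖f h‖ / h) L (nhds 1) → ∀ᶠ h in L, 0 < ‖f h‖ := by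
    intro f hf
    filter_upwards [hf.eventually (eventually_gt_nhds one_pos), hmem] with h h1 hh
    have h2 : 0 < ‖f h‖ / h * h := mul_pos h1 hh
    rwa [div_mul_cancel₀ _ (ne_of_gt hh)] at h2
  have pa := pos_of _ na
  have pb := pos_of _ nb
  have pc := pos_of _ nc
  -- eventual positivity of inner product
  have pI : ∀ᶠ h in L, 0 < ⟪x s - x (s - h), x (s + 2 * h) - x (s + h)⟫ := by
    have t := Filter.Tendsto.inner (𝕜 := ℝ) ha1 hb1
    have hval : ⟪T, T⟫ = (1:ℝ) := by
      rw [real_inner_self_eq_norm_sq, hTn]; norm_num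
    rw [hval] at t
    filter_upwards [t.eventually (eventually_gt_nhds one_pos), hmem] with h h1 hh
    rw [real_inner_smul_left, real_inner_smul_right] at h1
    have hne : (h:ℝ) ≠ 0 := ne_of_gt hh
    have h2 : 0 < h * (h⁻¹ * (h⁻¹ * ⟪x s - x (s - h), x (s + 2 * h) - x (s + h)⟫)) :=
      mul_pos hh h1
    rw [mul_inv_cancel_left₀ hne] at h2
    have h3 : 0 < h * (h⁻¹ * ⟪x s - x (s - h), x (s + 2 * h) - x (s + h)⟫) := mul_pos hh h2
    rwa [mul_inv_cancel_left₀ hne] at h3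
  -- determinant limit
  have hdet : Tendsto
      (fun h : ℝ => det2 (x s - x (s - h)) (x (s + 2 * h) - x (s + h)) / h ^ 3)
      L (nhds (2 * k s)) := by
    have c0 : Continuous fun v : EuclideanSpace ℝ (Fin 2) => v 0 := by fun_prop
    have c1 : Continuous fun v : EuclideanSpace ℝ (Fin 2) => v 1 := by fun_prop
    have tA0 := (c0.tendsto _).comp hA
    have tA1 := (c1.tendsto _).comp hA
    have tB0 := (c0.tendsto _).comp hB
    have tB1 := (c1.tendsto _).comp hB
    have t : Tendsto (fun h : ℝ =>
        (T 0 * B h 1 - T 1 * B h 0) + (A h 0 * T 1 - A h 1 * T 0) +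
          h * (A h 0 * B h 1 - A h 1 * B h 0)) L
        (nhds ((T 0 * ((3/2:ℝ) • Q) 1 - T 1 * ((3/2:ℝ) • Q) 0) +
          ((-((2:ℝ)⁻¹ • Q)) 0 * T 1 - (-((2:ℝ)⁻¹ • Q)) 1 * T 0) +
          0 * ((-((2:ℝ)⁻¹ • Q)) 0 * ((3/2:ℝ) • Q) 1 -
            (-((2:ℝ)⁻¹ • Q)) 1 * ((3/2:ℝ) • Q) 0))) := by
      exact (((tendsto_const_nhds.mul tB1).sub (tendsto_const_nhds.mul tB0)).add
        ((tA0.mul tendsto_const_nhds).sub (tA1.mul tendsto_const_nhds))).add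
        (hid0.mul ((tA0.mul tB1).sub (tA1.mul tB0)))
    have hval : (T 0 * ((3/2:ℝ) • Q) 1 - T 1 * ((3/2:ℝ) • Q) 0) +
          ((-((2:ℝ)⁻¹ • Q)) 0 * T 1 - (-((2:ℝ)⁻¹ • Q)) 1 * T 0) +
          0 * ((-((2:ℝ)⁻¹ • Q)) 0 * ((3/2:ℝ) • Q) 1 -
            (-((2:ℝ)⁻¹ • Q)) 1 * ((3/2:ℝ) • Q) 0) = 2 * k s := by
      simp only [PiLp.smul_apply, PiLp.neg_apply, smul_eq_mul, hQ0, hQ1]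
      linear_combination (2 * k s) * hT2
    rw [hval] at t
    refine t.congr' ?_
    filter_upwards [hmem] with h hh
    have hne : (h:ℝ) ≠ 0 := ne_of_gt hh
    have hne2 : (h:ℝ) ^ 2 ≠ 0 := pow_ne_zero 2 hne
    have ea0 : (x s - x (s - h)) 0 = h * T 0 + h ^ 2 * A h 0 := by
      simp only [hAdef, PiLp.smul_apply, PiLp.sub_apply, smul_eq_mul]
      rw [mul_inv_cancel_left₀ hne2]; ring
    have ea1 : (x s - x (s - h)) 1 = h * T 1 + h ^ 2 * A h 1 := by
      simp only [hAdef, PiLp.smul_apply, PiLp.sub_apply, smul_eq_mul]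
      rw [mul_inv_cancel_left₀ hne2]; ring
    have eb0 : (x (s + 2 * h) - x (s + h)) 0 = h * T 0 + h ^ 2 * B h 0 := by
      simp only [hBdef, PiLp.smul_apply, PiLp.sub_apply, smul_eq_mul]
      rw [mul_inv_cancel_left₀ hne2]; ring
    have eb1 : (x (s + 2 * h) - x (s + h)) 1 = h * T 1 + h ^ 2 * B h 1 := by
      simp only [hBdef, PiLp.smul_apply, PiLp.sub_apply, smul_eq_mul]
      rw [mul_inv_cancel_left₀ hne2]; ring
    simp only [det2]
    rw [ea0, ea1, eb0, eb1]
    exact alg3' _ _ _ _ _ _ _ hne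
  -- G and its limits
  set D : ℝ → ℝ := fun h => det2 (x s - x (s - h)) (x (s + 2 * h) - x (s + h)) with hDdef
  set G : ℝ → ℝ := fun h =>
    D h / (‖x s - x (s - h)‖ * ‖x (s + 2 * h) - x (s + h)‖) with hGdef
  have hG0 : Tendsto G L (nhds 0) := by
    have t := (hdet.mul (ia.mul ib)).mul hid0
    have hval : 2 * k s * (1 * 1) * 0 = 0 := by ring
    rw [hval] at t
    refine t.congr' ?_
    filter_upwards [hmem, pa, pb] with h hh hpa hpb
    have hne : (h:ℝ) ≠ 0 := ne_of_gt hh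
    simp only [hGdef, hDdef]
    exact alg1' _ _ _ _ hne hpa.ne' hpb.ne'
  have hGlim : Tendsto (fun h : ℝ => G h / (2 * ‖x (s + h) - x s‖)) L (nhds (k s)) := by
    have t := (hdet.mul ((ia.mul ib).mul ic)).mul
      (tendsto_const_nhds (x := (2:ℝ)⁻¹))
    have hval : 2 * k s * (1 * 1 * 1) * (2:ℝ)⁻¹ = k s := by ring
    rw [hval] at t
    refine t.congr' ?_
    filter_upwards [hmem, pa, pb, pc] with h hh hpa hpb hpc
    have hne : (h:ℝ) ≠ 0 := ne_of_gt hh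
    simp only [hGdef, hDdef]
    exact alg2' _ _ _ _ _ hne hpa.ne' hpb.ne' hpc.ne'
  -- the arcsin/y function
  have hr : Tendsto (fun y : ℝ => if y = 0 then 1 else Real.arcsin y / y) (nhds 0) (nhds 1) := by
    rw [← nhdsNE_sup_pure (0:ℝ), tendsto_sup]
    constructor
    · have hd : HasDerivAt Real.arcsin 1 0 := by
        simpa using Real.hasDerivAt_arcsin (x := 0) (by norm_num) (by norm_num)
      have hs := hasDerivAt_iff_tendsto_slope.mp hd
      refine hs.congr' ?_
      filter_upwards [eventually_mem_nhdsWithin] with y hy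
      have hyne : y ≠ 0 := hy
      simp [slope_def_field, if_neg hyne, div_eq_inv_mul]
    · have h0 : (fun y : ℝ => if y = 0 then 1 else Real.arcsin y / y) 0 = 1 := by simp
      simpa [h0] using
        tendsto_pure_nhds (fun y : ℝ => if y = 0 then 1 else Real.arcsin y / y) 0
  have hrG : Tendsto (fun h : ℝ => if G h = 0 then 1 else Real.arcsin (G h) / G h) L (nhds 1) :=
    hr.comp hG0
  have hfinal : Tendsto (fun h : ℝ =>
      (if G h = 0 then 1 else Real.arcsin (G h) / G h) * (G h / (2 * ‖x (s + h) - x s‖)))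
      L (nhds (k s)) := by
    have := hrG.mul hGlim
    simpa using this
  refine hfinal.congr' ?_
  filter_upwards [hmem, pa, pb, pc, pI] with h hh hpa hpb hpc hpI
  have hne : (h:ℝ) ≠ 0 := ne_of_gt hh
  have key1 := sign_arccos_eq' _ _ hpa hpb hpI
  have hcne : (2 * ‖x (s + h) - x s‖) ≠ 0 := by positivity
  have prodeq : (if G h = 0 then 1 else Real.arcsin (G h) / G h) *
      (G h / (2 * ‖x (s + h) - x s‖)) = Real.arcsin (G h) / (2 * ‖x (s + h) - x s‖) := by
    rcases eq_or_ne (G h) 0 with h0 | h0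
    · rw [if_pos h0, one_mul, h0, Real.arcsin_zero, zero_div]
    · rw [if_neg h0, div_mul_div_comm, mul_comm (Real.arcsin (G h)) (G h),
        mul_div_mul_left _ _ h0]
  rw [prodeq]
  have main : Real.sign (det2 (x s - x (s - h)) (x (s + 2 * h) - x (s + h))) *
      (1 / (2 * ‖x (s + h) - x s‖)) *
      Real.arccos (⟪x s - x (s - h), x (s + 2 * h) - x (s + h)⟫ /
        (‖x s - x (s - h)‖ * ‖x (s + 2 * h) - x (s + h)‖)) =
      Real.arcsin (G h) / (2 * ‖x (s + h) - x s‖) := by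
    rw [show Real.sign (det2 (x s - x (s - h)) (x (s + 2 * h) - x (s + h))) *
        (1 / (2 * ‖x (s + h) - x s‖)) *
        Real.arccos (⟪x s - x (s - h), x (s + 2 * h) - x (s + h)⟫ /
          (‖x s - x (s - h)‖ * ‖x (s + 2 * h) - x (s + h)‖)) =
        (Real.sign (det2 (x s - x (s - h)) (x (s + 2 * h) - x (s + h))) *
          Real.arccos (⟪x s - x (s - h), x (s + 2 * h) - x (s + h)⟫ /
            (‖x s - x (s - h)‖ * ‖x (s + 2 * h) - x (s + h)‖))) *
          (1 / (2 * ‖x (s + h) - x s‖)) from by ring, key1]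
    rw [hGdef, hDdef, mul_one_div]
  exact main.symm
end
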